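/- If X₊ has the half-normal density 2φ(x) on [0,∞), X₀ is standard normal, X₊ and X₀ are independent, and δ ∈ (-1,1), then X = δX₊ + √(1-δ²)X₀ has density 2φ(x)Φ(αx) where α = δ/√(1-δ²). -/

import Mathlib

open MeasureTheory Real

noncomputable def snPhi (x : ℝ) : ℝ := (Real.sqrt (2 * Real.pi))⁻¹ * Real.exp (-x ^ 2 / 2)

noncomputable def snCdf (x : ℝ) : ℝ := ∫ t in Set.Iic x, snPhi t

open ProbabilityTheory

lemma snPhi_nonneg (x : ℝ) : 0 ≤ snPhi x := by unfold snPhi; positivity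

lemma snPhi_neg (x : ℝ) : snPhi (-x) = snPhi x := by simp [snPhi]

lemma sn_aux_map (m s : ℝ) :
    Measure.map (fun z => m + s * z) (gaussianReal 0 1)
      = gaussianReal m ⟨s ^ 2, sq_nonneg s⟩ := by
  have h : (fun z : ℝ => m + s * z) = (· + m) ∘ (s * ·) := by ext z; simp [add_comm]
  rw [h, ← Measure.map_map (measurable_add_const m) (measurable_const_mul s),
    gaussianReal_map_const_mul, gaussianReal_map_add_const]
  simp
  rfl

lemma sn_gauss_eq_snPhi : gaussianPDFReal 0 1 = snPhi := by
  ext x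
  simp [gaussianPDFReal, snPhi]

lemma sn_half_integral {s : ℝ} (hs : 0 < s) (m : ℝ) :
    ∫ u in Set.Ici (0:ℝ), gaussianPDFReal m ⟨s ^ 2, sq_nonneg s⟩ u = snCdf (m / s) := by
  have hVne : (⟨s ^ 2, sq_nonneg s⟩ : NNReal) ≠ 0 := by
    intro h
    have := congrArg NNReal.toReal h
    change s ^ 2 = 0 at this
    nlinarith
  have h1 := gaussianReal_apply_eq_integral m hVne (Set.Ici (0:ℝ))
  have h2 : gaussianReal m ⟨s ^ 2, sq_nonneg s⟩ (Set.Ici (0:ℝ))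
      = ENNReal.ofReal (snCdf (m / s)) := by
    rw [← sn_aux_map m s, Measure.map_apply (by fun_prop) measurableSet_Ici]
    have hset : (fun z => m + s * z) ⁻¹' Set.Ici (0:ℝ) = Set.Ici (-(m / s)) := by
      ext z
      simp only [Set.mem_preimage, Set.mem_Ici, ← neg_div, div_le_iff₀ hs]
      constructor <;> intro h <;> nlinarith
    rw [hset, gaussianReal_apply_eq_integral 0 one_ne_zero]
    congr 1
    rw [sn_gauss_eq_snPhi, snCdf]
    rw [show (∫ t in Set.Iic (m/s), snPhi t) = ∫ t in Set.Iic (m/s), snPhi (-t) from by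
      simp [snPhi_neg]]
    rw [integral_comp_neg_Iic, MeasureTheory.integral_Ici_eq_integral_Ioi]
  rw [h1] at h2
  have hA : 0 ≤ ∫ u in Set.Ici (0:ℝ), gaussianPDFReal m ⟨s ^ 2, sq_nonneg s⟩ u :=
    integral_nonneg fun u => gaussianPDFReal_nonneg _ _ _
  have hB : 0 ≤ snCdf (m / s) := integral_nonneg fun t => snPhi_nonneg t
  rwa [ENNReal.ofReal_eq_ofReal_iff hA hB] at h2

lemma sn_pointwise {δ s : ℝ} (hs : 0 < s) (hδs : s ^ 2 = 1 - δ ^ 2) (x u : ℝ) :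
    (if 0 ≤ u then 2 * snPhi u else 0) * gaussianPDFReal (δ * u) ⟨s ^ 2, sq_nonneg s⟩ x
      = Set.indicator (Set.Ici 0)
          (fun t => 2 * snPhi x * gaussianPDFReal (δ * x) ⟨s ^ 2, sq_nonneg s⟩ t) u := by
  by_cases h : 0 ≤ u
  · rw [if_pos h, Set.indicator_of_mem (Set.mem_Ici.mpr h)]
    simp only [snPhi, gaussianPDFReal, NNReal.coe_mk]
    have key : Real.exp (-u ^ 2 / 2) * Real.exp (-(x - δ * u) ^ 2 / (2 * s ^ 2))
        = Real.exp (-x ^ 2 / 2) * Real.exp (-(u - δ * x) ^ 2 / (2 * s ^ 2)) := by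
      rw [← Real.exp_add, ← Real.exp_add]
      congr 1
      have hs2 : s ^ 2 ≠ 0 := by positivity
      field_simp
      linear_combination (x ^ 2 - u ^ 2) * hδs
    change 2 * ((Real.sqrt (2 * Real.pi))⁻¹ * Real.exp (-u ^ 2 / 2)) *
        ((Real.sqrt (2 * Real.pi * s ^ 2))⁻¹ * Real.exp (-(x - δ * u) ^ 2 / (2 * s ^ 2))) =
      2 * ((Real.sqrt (2 * Real.pi))⁻¹ * Real.exp (-x ^ 2 / 2)) *
        ((Real.sqrt (2 * Real.pi * s ^ 2))⁻¹ * Real.exp (-(u - δ * x) ^ 2 / (2 * s ^ 2)))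
    linear_combination
      (2 * (Real.sqrt (2 * Real.pi))⁻¹ * (Real.sqrt (2 * Real.pi * s ^ 2))⁻¹) * key
  · rw [if_neg h, Set.indicator_of_notMem (by simpa using h), zero_mul]

lemma sn_inner {δ s : ℝ} (hs : 0 < s) (hδs : s ^ 2 = 1 - δ ^ 2) (x : ℝ) :
    ∫⁻ u, ENNReal.ofReal (if 0 ≤ u then 2 * snPhi u else 0) *
        ENNReal.ofReal (gaussianPDFReal (δ * u) ⟨s ^ 2, sq_nonneg s⟩ x) ∂volume
      = ENNReal.ofReal (2 * snPhi x * snCdf (δ / s * x)) := by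
  have hnn : ∀ u : ℝ, 0 ≤ (if 0 ≤ u then 2 * snPhi u else 0) := fun u => by
    split
    · exact mul_nonneg (by norm_num) (snPhi_nonneg u)
    · exact le_refl 0
  have hptw := fun u => sn_pointwise hs hδs x u
  simp_rw [← ENNReal.ofReal_mul (hnn _)]
  rw [← ofReal_integral_eq_lintegral_ofReal]
  · congr 1
    rw [show (fun u => (if 0 ≤ u then 2 * snPhi u else 0) *
          gaussianPDFReal (δ * u) ⟨s ^ 2, sq_nonneg s⟩ x)
        = Set.indicator (Set.Ici 0)
          (fun t => 2 * snPhi x * gaussianPDFReal (δ * x) ⟨s ^ 2, sq_nonneg s⟩ t)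
        from funext hptw]
    rw [integral_indicator measurableSet_Ici, integral_const_mul,
      sn_half_integral hs]
    rw [show δ * x / s = δ / s * x from by ring]
  · rw [show (fun u => (if 0 ≤ u then 2 * snPhi u else 0) *
          gaussianPDFReal (δ * u) ⟨s ^ 2, sq_nonneg s⟩ x)
        = Set.indicator (Set.Ici 0)
          (fun t => 2 * snPhi x * gaussianPDFReal (δ * x) ⟨s ^ 2, sq_nonneg s⟩ t)
        from funext hptw]
    exact ((integrable_gaussianPDFReal _ _).const_mul _).indicator measurableSet_Ici
  · exact ae_of_all _ fun u => mul_nonneg (hnn u) (gaussianPDFReal_nonneg _ _ _)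

/-- If `X₊` is half-normal, `X₀` is standard normal, they are independent and `δ ∈ (-1,1)`,
then `δ X₊ + √(1-δ²) X₀` has the skew normal density `2φ(x)Φ(αx)` with `α = δ/√(1-δ²)`. -/
theorem skew_normal_stochastic_representation
    {Ω : Type*} [MeasureSpace Ω] [IsProbabilityMeasure (volume : Measure Ω)]
    (Xp X0 : Ω → ℝ) (hXp : Measurable Xp) (hX0 : Measurable X0)
    (hhalf : Measure.map Xp (volume : Measure Ω) =
      volume.withDensity (fun x => ENNReal.ofReal (if 0 ≤ x then 2 * snPhi x else 0)))
    (hnorm : Measure.map X0 (volume : Measure Ω) = volume.withDensity (fun x => ENNReal.ofReal (snPhi x)))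
    (hindep : ProbabilityTheory.IndepFun Xp X0 (volume : Measure Ω))
    (δ : ℝ) (hδ : δ ∈ Set.Ioo (-1 : ℝ) 1) :
    Measure.map (fun ω => δ * Xp ω + Real.sqrt (1 - δ ^ 2) * X0 ω) (volume : Measure Ω) =
      volume.withDensity
        (fun x => ENNReal.ofReal (2 * snPhi x * snCdf (δ / Real.sqrt (1 - δ ^ 2) * x))) := by
  obtain ⟨hδ1, hδ2⟩ := hδ
  have h1 : (0:ℝ) < 1 - δ ^ 2 := by nlinarith
  set s := Real.sqrt (1 - δ ^ 2) with hsdef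
  have hs : 0 < s := Real.sqrt_pos.mpr h1
  have hs2 : s ^ 2 = 1 - δ ^ 2 := Real.sq_sqrt h1.le
  set V : NNReal := ⟨s ^ 2, sq_nonneg s⟩ with hV
  have hVne : V ≠ 0 := by
    intro h
    have := congrArg NNReal.toReal h
    simp [hV] at this
    change s ^ 2 = 0 at this
    nlinarith
  have hnorm' : Measure.map X0 (volume : Measure Ω) = gaussianReal 0 1 := by
    rw [hnorm, gaussianReal_of_var_ne_zero 0 one_ne_zero]
    congr 1
    ext x
    simp [gaussianPDF, sn_gauss_eq_snPhi]
  have hjoint : Measure.map (fun ω => (Xp ω, X0 ω)) (volume : Measure Ω)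
      = (Measure.map Xp volume).prod (gaussianReal 0 1) := by
    rw [← hnorm']
    exact (ProbabilityTheory.indepFun_iff_map_prod_eq_prod_map_map
      hXp.aemeasurable hX0.aemeasurable).mp hindep
  have hmp : Measurable fun p : ℝ × ℝ => δ * p.1 + s * p.2 := by fun_prop
  have hXmap : Measure.map (fun ω => δ * Xp ω + s * X0 ω) (volume : Measure Ω)
      = Measure.map (fun p : ℝ × ℝ => δ * p.1 + s * p.2)
          ((Measure.map Xp volume).prod (gaussianReal 0 1)) := by
    rw [← hjoint, Measure.map_map hmp (hXp.prodMk hX0)]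
    rfl
  have hmf : Measurable fun u : ℝ => ENNReal.ofReal (if 0 ≤ u then 2 * snPhi u else 0) := by
    refine Measurable.ennreal_ofReal (Measurable.ite measurableSet_Ici ?_ measurable_const)
    unfold snPhi; fun_prop
  have hmg : Measurable fun p : ℝ × ℝ => ENNReal.ofReal (gaussianPDFReal (δ * p.1) V p.2) := by
    refine Measurable.ennreal_ofReal ?_
    unfold gaussianPDFReal; fun_prop
  refine Measure.ext fun A hA => ?_
  rw [hXmap, Measure.map_apply hmp hA, Measure.prod_apply (hmp hA),
    withDensity_apply _ hA]
  have hkey : ∀ u : ℝ,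
      (gaussianReal 0 1) (Prod.mk u ⁻¹' ((fun p : ℝ × ℝ => δ * p.1 + s * p.2) ⁻¹' A))
        = ∫⁻ x in A, ENNReal.ofReal (gaussianPDFReal (δ * u) V x) ∂volume := by
    intro u
    have hpre : Prod.mk u ⁻¹' ((fun p : ℝ × ℝ => δ * p.1 + s * p.2) ⁻¹' A)
        = (fun v => δ * u + s * v) ⁻¹' A := rfl
    rw [hpre, ← Measure.map_apply (by fun_prop) hA, sn_aux_map (δ * u) s,
      ← hV, gaussianReal_of_var_ne_zero _ hVne, withDensity_apply _ hA]
    rfl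
  simp_rw [hkey]
  have hmg2 : Measurable (Function.uncurry fun u x : ℝ =>
      ENNReal.ofReal (gaussianPDFReal (δ * u) V x)) := hmg
  have hswap : Measurable (Function.uncurry fun u x : ℝ =>
      ENNReal.ofReal (if 0 ≤ u then 2 * snPhi u else 0) *
        ENNReal.ofReal (gaussianPDFReal (δ * u) V x)) :=
    (hmf.comp measurable_fst).mul hmg
  rw [hhalf, lintegral_withDensity_eq_lintegral_mul _ hmf
    (Measurable.lintegral_prod_right hmg2)]
  simp only [Pi.mul_apply]
  simp_rw [← lintegral_const_mul' _ _ ENNReal.ofReal_ne_top]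
  rw [lintegral_lintegral_swap hswap.aemeasurable]
  refine lintegral_congr fun x => ?_
  exact sn_inner hs hs2 x
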